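/- arXiv:1309.0559 — 7 statements merged into one kernel-verified Lean document; each statement's English description precedes it below -/
import Mathlib

section
/- The map ρ sending the model matrix [[K,M],[L,N]] to the 3×3 block upper-triangular matrix [[I, M, K],[0, N, L],[0, 0, I]] is an injective group homomorphism from the group of model matrices with invertible N under the series product to the general linear group (under ordinary matrix multiplication). That is, ρ(V₂ ∗ V₁) = ρ(V₂)·ρ(V₁). -/
open Matrix

/-- The embedding `ρ([[K,M],[L,N]]) = [[I,M,K],[0,N,L],[0,0,I]]` of a model matrix into
3×3 block upper-triangular matrices, with block index type `Fin x ⊕ (Fin u ⊕ Fin x)`. -/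
noncomputable def rho {x u : ℕ}
    (K : Matrix (Fin x) (Fin x) ℂ) (M : Matrix (Fin x) (Fin u) ℂ)
    (L : Matrix (Fin u) (Fin x) ℂ) (N : Matrix (Fin u) (Fin u) ℂ) :
    Matrix (Fin x ⊕ (Fin u ⊕ Fin x)) (Fin x ⊕ (Fin u ⊕ Fin x)) ℂ :=
  fromBlocks 1 (fromCols M K) 0 (fromBlocks N L 0 1)

/-- `ρ` is an injective group homomorphism from the group of model matrices
with invertible `N` (under the series product) into the general linear group:
`ρ(V₂ ∗ V₁) = ρ(V₂) · ρ(V₁)`, and `ρ` is injective. -/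
theorem rho_hom_injective {x u : ℕ} :
    (∀ (K₁ K₂ : Matrix (Fin x) (Fin x) ℂ) (M₁ M₂ : Matrix (Fin x) (Fin u) ℂ)
        (L₁ L₂ : Matrix (Fin u) (Fin x) ℂ) (N₁ N₂ : Matrix (Fin u) (Fin u) ℂ),
        IsUnit N₁ → IsUnit N₂ →
        rho (K₁ + M₂ * L₁ + K₂) (M₁ + M₂ * N₁) (L₂ + N₂ * L₁) (N₂ * N₁) =
          rho K₂ M₂ L₂ N₂ * rho K₁ M₁ L₁ N₁) ∧
    (∀ (K K' : Matrix (Fin x) (Fin x) ℂ) (M M' : Matrix (Fin x) (Fin u) ℂ)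
        (L L' : Matrix (Fin u) (Fin x) ℂ) (N N' : Matrix (Fin u) (Fin u) ℂ),
        rho K M L N = rho K' M' L' N' → K = K' ∧ M = M' ∧ L = L' ∧ N = N') ∧
    (∀ (K : Matrix (Fin x) (Fin x) ℂ) (M : Matrix (Fin x) (Fin u) ℂ)
        (L : Matrix (Fin u) (Fin x) ℂ) (N : Matrix (Fin u) (Fin u) ℂ),
        IsUnit N → IsUnit (rho K M L N)) := by
  refine ⟨fun K₁ K₂ M₁ M₂ L₁ L₂ N₁ N₂ _ _ => ?_, fun K K' M M' L L' N N' h => ?_,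
    fun K M L N hN => ?_⟩
  · simp only [rho, fromBlocks_multiply, fromCols_mul_fromBlocks, Matrix.one_mul,
      Matrix.mul_one, Matrix.mul_zero, Matrix.zero_mul, add_zero, zero_add,
      Matrix.mul_add, Matrix.add_mul]
    ext (i | i | i) (j | j | j) <;> simp [fromBlocks, fromCols] <;> ring
  · simp only [rho, fromBlocks_inj, fromCols_ext_iff] at h
    obtain ⟨-, ⟨hM, hK⟩, -, hN, hL, -, -⟩ := h
    exact ⟨hK, hM, hL, hN⟩
  · rw [Matrix.isUnit_iff_isUnit_det, rho, det_fromBlocks_zero₂₁, det_fromBlocks_zero₂₁,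
      det_one, one_mul, mul_one]
    exact hN.map detMonoidHom
end

section
/- A coefficient matrix G (a 2×2 block operator matrix on 𝔥 ⊕ (𝔥 ⊗ 𝔎)) satisfies both G + G† + G†δ̂G = 0 and G + G† + Gδ̂G† = 0 (where δ̂ = [[0,0],[0,I]]) if and only if G has the form G = [[-(1/2)L†L - iH, -L†S],[L, S - I]] for some unitary S on 𝔥 ⊗ 𝔎, some operator L : 𝔥 → 𝔥 ⊗ 𝔎, and some self-adjoint H on 𝔥. -/
open Matrix

/-- The Hudson–Evans projection `δ̂ = [[0,0],[0,I]]` on `𝔥 ⊕ (𝔥 ⊗ 𝔎)`, with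
`dim 𝔥 = p` and `dim (𝔥 ⊗ 𝔎) = q`. -/
noncomputable def deltaHat (p q : ℕ) : Matrix (Fin p ⊕ Fin q) (Fin p ⊕ Fin q) ℂ :=
  fromBlocks 0 0 0 1

lemma cond_blocks {p q : ℕ} (K : Matrix (Fin p) (Fin p) ℂ) (M : Matrix (Fin p) (Fin q) ℂ)
    (L : Matrix (Fin q) (Fin p) ℂ) (N : Matrix (Fin q) (Fin q) ℂ) :
    (fromBlocks K M L N + (fromBlocks K M L N)ᴴ
        + (fromBlocks K M L N)ᴴ * deltaHat p q * fromBlocks K M L N = 0 ∧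
      fromBlocks K M L N + (fromBlocks K M L N)ᴴ
        + fromBlocks K M L N * deltaHat p q * (fromBlocks K M L N)ᴴ = 0) ↔
    ((K + Kᴴ + Lᴴ * L = 0 ∧ M + Lᴴ + Lᴴ * N = 0 ∧ L + Mᴴ + Nᴴ * L = 0 ∧
        N + Nᴴ + Nᴴ * N = 0) ∧
      (K + Kᴴ + M * Mᴴ = 0 ∧ M + Lᴴ + M * Nᴴ = 0 ∧ L + Mᴴ + N * Mᴴ = 0 ∧
        N + Nᴴ + N * Nᴴ = 0)) := by
  rw [deltaHat, fromBlocks_conjTranspose]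
  simp only [fromBlocks_multiply, Matrix.mul_zero, Matrix.zero_mul, Matrix.mul_one,
    Matrix.one_mul, add_zero, zero_add, fromBlocks_add, ← fromBlocks_zero, fromBlocks_inj]

/-- A coefficient matrix `G` satisfies the isometry and co-isometry conditions
`G + G† + G†δ̂G = 0` and `G + G† + Gδ̂G† = 0` if and only if it is of
Hudson–Parthasarathy form `G = [[-(1/2)L†L - iH, -L†S],[L, S - I]]` with `S` unitary
and `H` self-adjoint. -/
theorem unitary_ito_generator_iff {p q : ℕ}
    (G : Matrix (Fin p ⊕ Fin q) (Fin p ⊕ Fin q) ℂ) :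
    (G + Gᴴ + Gᴴ * deltaHat p q * G = 0 ∧ G + Gᴴ + G * deltaHat p q * Gᴴ = 0) ↔
    ∃ (S : Matrix (Fin q) (Fin q) ℂ) (L : Matrix (Fin q) (Fin p) ℂ)
      (H : Matrix (Fin p) (Fin p) ℂ),
      S ∈ Matrix.unitaryGroup (Fin q) ℂ ∧ Hᴴ = H ∧
      G = fromBlocks (-(1/2 : ℂ) • (Lᴴ * L) - Complex.I • H) (-(Lᴴ * S)) L (S - 1) := by
  obtain ⟨K, M, L, N, rfl⟩ : ∃ K M L N, G = fromBlocks K M L N :=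
    ⟨_, _, _, _, (fromBlocks_toBlocks G).symm⟩
  rw [cond_blocks]
  constructor
  · rintro ⟨⟨e11, e12, e21, e22⟩, ⟨f11, f12, f21, f22⟩⟩
    refine ⟨N + 1, L, (Complex.I / 2) • (K - Kᴴ), ?_, ?_, ?_⟩
    · constructor
      · show star (N + 1) * (N + 1) = 1
        rw [Matrix.star_eq_conjTranspose]
        have h : (N + 1)ᴴ * (N + 1) = (N + Nᴴ + Nᴴ * N) + 1 := by
          simp only [conjTranspose_add, conjTranspose_one, Matrix.add_mul, Matrix.mul_add,
            Matrix.mul_one, Matrix.one_mul]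
          abel
        rw [h, e22, zero_add]
      · show (N + 1) * star (N + 1) = 1
        rw [Matrix.star_eq_conjTranspose]
        have h : (N + 1) * (N + 1)ᴴ = (N + Nᴴ + N * Nᴴ) + 1 := by
          simp only [conjTranspose_add, conjTranspose_one, Matrix.add_mul, Matrix.mul_add,
            Matrix.mul_one, Matrix.one_mul]
          abel
        rw [h, f22, zero_add]
    · simp only [conjTranspose_smul, conjTranspose_sub, conjTranspose_conjTranspose,
        Complex.star_def, map_div₀, Complex.conj_I, Complex.conj_ofNat]
      module
    · rw [fromBlocks_inj]
      refine ⟨?_, ?_, rfl, by abel⟩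
      · have hLL : Lᴴ * L = -(K + Kᴴ) := by
          have h := e11
          rwa [add_comm, ← eq_neg_iff_add_eq_zero] at h
        rw [hLL, smul_smul]
        have hI : Complex.I * (Complex.I / 2) = -(1/2) := by
          rw [mul_div_assoc', Complex.I_mul_I]; norm_num
        rw [hI]
        module
      · rw [Matrix.mul_add, Matrix.mul_one, ← sub_eq_zero]
        have h : M - -(Lᴴ * N + Lᴴ) = M + Lᴴ + Lᴴ * N := by abel
        rw [h, e12]
  · rintro ⟨S, L', H, hS, hH, hG⟩
    rw [fromBlocks_inj] at hG
    obtain ⟨rfl, rfl, rfl, rfl⟩ := hG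
    have hS1 : Sᴴ * S = 1 := by
      have := hS.1; rwa [Matrix.star_eq_conjTranspose] at this
    have hS2 : S * Sᴴ = 1 := by
      have := hS.2; rwa [Matrix.star_eq_conjTranspose] at this
    have h1 : ∀ X : Matrix (Fin p) (Fin q) ℂ, X * S * Sᴴ = X := fun X => by
      rw [Matrix.mul_assoc, hS2, Matrix.mul_one]
    have h2 : ∀ X : Matrix (Fin q) (Fin p) ℂ, S * (Sᴴ * X) = X := fun X => by
      rw [← Matrix.mul_assoc, hS2, Matrix.one_mul]
    have hA : (-(1/2 : ℂ) • (Lᴴ * L) - Complex.I • H)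
        + (-(1/2 : ℂ) • (Lᴴ * L) - Complex.I • H)ᴴ = -(Lᴴ * L) := by
      simp only [conjTranspose_sub, conjTranspose_smul, conjTranspose_mul,
        conjTranspose_conjTranspose, hH, Complex.star_def, map_neg, map_div₀,
        Complex.conj_I, Complex.conj_ofNat, _root_.map_one]
      module
    refine ⟨⟨?_, ?_, ?_, ?_⟩, ?_, ?_, ?_, ?_⟩
    · rw [hA]; exact neg_add_cancel _
    · simp only [Matrix.mul_sub, Matrix.mul_one]; abel
    · simp only [conjTranspose_neg, conjTranspose_mul, conjTranspose_conjTranspose,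
        conjTranspose_sub, conjTranspose_one, Matrix.sub_mul, Matrix.one_mul]
      abel
    · simp only [conjTranspose_sub, conjTranspose_one, Matrix.sub_mul, Matrix.mul_sub,
        Matrix.one_mul, Matrix.mul_one, hS1]
      abel
    · rw [hA]
      simp only [conjTranspose_neg, conjTranspose_mul, conjTranspose_conjTranspose,
        Matrix.neg_mul, Matrix.mul_neg, neg_neg, Matrix.mul_assoc, h2]
      exact neg_add_cancel _
    · simp only [conjTranspose_sub, conjTranspose_one, conjTranspose_neg, conjTranspose_mul,
        conjTranspose_conjTranspose, Matrix.neg_mul, Matrix.mul_sub, Matrix.mul_one, h1]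
      abel
    · simp only [conjTranspose_neg, conjTranspose_mul, conjTranspose_conjTranspose,
        Matrix.mul_neg, Matrix.sub_mul, Matrix.one_mul, h2]
      abel
    · simp only [conjTranspose_sub, conjTranspose_one, Matrix.sub_mul, Matrix.mul_sub,
        Matrix.one_mul, Matrix.mul_one, hS2]
      abel
end

section
/- For Hudson–Parthasarathy triples, the series product of the associated Itô generator matrices is again an Itô generator matrix of a triple: G_{(S₂,L₂,H₂)} ◁ G_{(S₁,L₁,H₁)} = G_{(S₂S₁, L₂ + S₂L₁, H₁ + H₂ + Im(L₂†S₂L₁))}, where G_{(S,L,H)} = [[-(1/2)L†L - iH, -L†S],[L, S-I]] and G₂ ◁ G₁ = G₁ + G₂ + G₂δ̂G₁ with δ̂ = [[0,0],[0,I]]. -/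
open Matrix

/-- The Itô generator matrix `G_(S,L,H) = [[-(1/2)L†L - iH, -L†S],[L, S-I]]`. -/
noncomputable def hpGen {p q : ℕ} (S : Matrix (Fin q) (Fin q) ℂ)
    (L : Matrix (Fin q) (Fin p) ℂ) (H : Matrix (Fin p) (Fin p) ℂ) :
    Matrix (Fin p ⊕ Fin q) (Fin p ⊕ Fin q) ℂ :=
  fromBlocks (-(1/2 : ℂ) • (Lᴴ * L) - Complex.I • H) (-(Lᴴ * S)) L (S - 1)

/-- The series product `G₂ ◁ G₁ = G₁ + G₂ + G₂δ̂G₁` of coefficient matrices. -/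
noncomputable def seriesProd {p q : ℕ}
    (G₂ G₁ : Matrix (Fin p ⊕ Fin q) (Fin p ⊕ Fin q) ℂ) :
    Matrix (Fin p ⊕ Fin q) (Fin p ⊕ Fin q) ℂ :=
  G₁ + G₂ + G₂ * deltaHat p q * G₁

/-- For Hudson–Parthasarathy triples the series product of Itô generator matrices is again
an Itô generator matrix:
`G_(S₂,L₂,H₂) ◁ G_(S₁,L₁,H₁) = G_(S₂S₁, L₂ + S₂L₁, H₁ + H₂ + Im(L₂†S₂L₁))`,
where `Im X = (X - X†)/(2i)`. -/
theorem hpGen_seriesProd {p q : ℕ}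
    (S₁ S₂ : Matrix (Fin q) (Fin q) ℂ)
    (L₁ L₂ : Matrix (Fin q) (Fin p) ℂ)
    (H₁ H₂ : Matrix (Fin p) (Fin p) ℂ)
    (hS₁ : S₁ ∈ Matrix.unitaryGroup (Fin q) ℂ)
    (hS₂ : S₂ ∈ Matrix.unitaryGroup (Fin q) ℂ)
    (hH₁ : H₁ᴴ = H₁) (hH₂ : H₂ᴴ = H₂) :
    seriesProd (hpGen S₂ L₂ H₂) (hpGen S₁ L₁ H₁) =
      hpGen (S₂ * S₁) (L₂ + S₂ * L₁)
        (H₁ + H₂ + (2 * Complex.I)⁻¹ • (L₂ᴴ * S₂ * L₁ - L₁ᴴ * S₂ᴴ * L₂)) := by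
  have h2 : S₂ᴴ * S₂ = 1 := Matrix.mem_unitaryGroup_iff'.mp hS₂
  simp only [seriesProd, hpGen, deltaHat, fromBlocks_multiply, fromBlocks_add,
    Matrix.mul_zero, Matrix.zero_mul, Matrix.mul_one, add_zero, zero_add]
  rw [fromBlocks_inj]
  refine ⟨?_, ?_, ?_, ?_⟩
  · have kL : S₂ᴴ * (S₂ * L₁) = L₁ := by rw [← Matrix.mul_assoc, h2, Matrix.one_mul]
    have hi : (2 * Complex.I)⁻¹ = -Complex.I / 2 := by
      field_simp
      ring_nf
      simp [Complex.I_sq]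
    rw [hi]
    simp only [conjTranspose_add, conjTranspose_mul, Matrix.mul_add, Matrix.add_mul,
      Matrix.mul_assoc, kL, smul_add, smul_sub, smul_smul, neg_mul, Matrix.neg_mul]
    match_scalars <;> simp [Complex.ext_iff] <;> norm_num
  · have kS : L₁ᴴ * S₂ᴴ * (S₂ * S₁) = L₁ᴴ * S₁ := by
      rw [Matrix.mul_assoc L₁ᴴ, ← Matrix.mul_assoc S₂ᴴ, h2, Matrix.one_mul]
    rw [conjTranspose_add, conjTranspose_mul, Matrix.add_mul, kS]
    simp only [Matrix.mul_sub, Matrix.mul_one, Matrix.neg_mul, Matrix.mul_assoc, neg_sub]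
    abel
  · simp only [Matrix.sub_mul, Matrix.one_mul]
    abel
  · noncomm_ring
end

section
/- If G is a unitary Itô generator matrix, i.e., G = G_{(S,L,H)} = [[-(1/2)L†L - iH, -L†S],[L, S-I]] with S unitary and H self-adjoint, then its adjoint G† is a two-sided inverse for the series product ◁: G ◁ G† = 0 = G† ◁ G, where G₂ ◁ G₁ = G₁ + G₂ + G₂δ̂G₁ with δ̂ = [[0,0],[0,I]], and furthermore G† = G_{(S†, -S†L, -H)}. -/
open Matrix

/-- If `G = G_(S,L,H)` is a unitary Itô generator matrix then `G†` is a two-sided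
inverse for the series product: `G ◁ G† = 0 = G† ◁ G`, and `G† = G_(S†, -S†L, -H)`. -/
theorem hpGen_adjoint_inverse {p q : ℕ}
    (S : Matrix (Fin q) (Fin q) ℂ) (L : Matrix (Fin q) (Fin p) ℂ)
    (H : Matrix (Fin p) (Fin p) ℂ)
    (hS : S ∈ Matrix.unitaryGroup (Fin q) ℂ) (hH : Hᴴ = H) :
    seriesProd (hpGen S L H) (hpGen S L H)ᴴ = 0 ∧
    seriesProd (hpGen S L H)ᴴ (hpGen S L H) = 0 ∧
    (hpGen S L H)ᴴ = hpGen Sᴴ (-(Sᴴ * L)) (-H) := by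
  have h1 : Sᴴ * S = 1 := hS.1
  have h2 : S * Sᴴ = 1 := hS.2
  have hadj : (hpGen S L H)ᴴ = hpGen Sᴴ (-(Sᴴ * L)) (-H) := by
    simp only [hpGen, fromBlocks_conjTranspose, conjTranspose_sub, conjTranspose_smul,
      conjTranspose_mul, conjTranspose_conjTranspose, conjTranspose_neg, conjTranspose_one,
      hH, Matrix.neg_mul, Matrix.mul_neg, neg_neg]
    rw [← Matrix.mul_assoc (Lᴴ * S) Sᴴ L, Matrix.mul_assoc Lᴴ S Sᴴ, h2, Matrix.mul_one,
      fromBlocks_inj]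
    refine ⟨?_, rfl, rfl, rfl⟩
    rw [show star (-(1/2 : ℂ)) = -(1/2 : ℂ) by simp,
      show star Complex.I = -Complex.I by simp [Complex.ext_iff]]
    module
  refine ⟨?_, ?_, hadj⟩ <;>
  · rw [hadj]
    simp only [seriesProd, hpGen, deltaHat, fromBlocks_multiply, fromBlocks_add,
      Matrix.mul_zero, Matrix.zero_mul, Matrix.mul_one, add_zero, zero_add,
      conjTranspose_neg, conjTranspose_mul, conjTranspose_conjTranspose,
      Matrix.neg_mul, Matrix.mul_neg, neg_neg]
    rw [show (0 : Matrix (Fin p ⊕ Fin q) (Fin p ⊕ Fin q) ℂ) = fromBlocks 0 0 0 0 by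
      simp, fromBlocks_inj]
    refine ⟨?_, ?_, ?_, ?_⟩
    all_goals
      try simp only [Matrix.sub_mul, Matrix.mul_sub, Matrix.neg_mul, Matrix.mul_neg,
        Matrix.one_mul, Matrix.mul_one, neg_neg]
    all_goals
      try rw [← Matrix.mul_assoc (Lᴴ * S) Sᴴ L, Matrix.mul_assoc Lᴴ S Sᴴ, h2, Matrix.mul_one]
    all_goals
      try rw [← Matrix.mul_assoc S Sᴴ L, h2, Matrix.one_mul]
    all_goals
      try simp only [Matrix.sub_mul, Matrix.mul_sub, Matrix.one_mul, Matrix.mul_one, h1, h2]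
    all_goals
      try rw [Matrix.mul_assoc (Lᴴ * S) Sᴴ S, h1, Matrix.mul_one]
    all_goals
      module
end

section
/- The map G = [[K,M],[L,N-I]] ↦ 𝕍_G = [[I,M,K],[0,N,L],[0,0,I]] is an injective group homomorphism from (GL_◁, ◁) to the group of invertible 3×3 block matrices under multiplication: 𝕍_{G₂}·𝕍_{G₁} = 𝕍_{G₂ ◁ G₁}, and 𝕍_G⁻¹ = 𝕍_{G'} where G' is the ◁-inverse of G. -/
open Matrix

/-- A coefficient matrix `G = [[K, M],[L, N - I]]` in `GL_◁`. -/
noncomputable def coeffMat {p q : ℕ}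
    (K : Matrix (Fin p) (Fin p) ℂ) (M : Matrix (Fin p) (Fin q) ℂ)
    (L : Matrix (Fin q) (Fin p) ℂ) (N : Matrix (Fin q) (Fin q) ℂ) :
    Matrix (Fin p ⊕ Fin q) (Fin p ⊕ Fin q) ℂ :=
  fromBlocks K M L (N - 1)

/-- The Belavkin representation `𝕍_G = [[I,M,K],[0,N,L],[0,0,I]]` of `G = [[K,M],[L,N-I]]`. -/
noncomputable def belavkin {p q : ℕ}
    (K : Matrix (Fin p) (Fin p) ℂ) (M : Matrix (Fin p) (Fin q) ℂ)
    (L : Matrix (Fin q) (Fin p) ℂ) (N : Matrix (Fin q) (Fin q) ℂ) :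
    Matrix (Fin p ⊕ (Fin q ⊕ Fin p)) (Fin p ⊕ (Fin q ⊕ Fin p)) ℂ :=
  fromBlocks 1 (fromCols M K) 0 (fromBlocks N L 0 1)

lemma fromCols_add' {m n₁ n₂ : Type*} (A₁ B₁ : Matrix m n₁ ℂ) (A₂ B₂ : Matrix m n₂ ℂ) :
    fromCols A₁ A₂ + fromCols B₁ B₂ = fromCols (A₁ + B₁) (A₂ + B₂) := by
  ext _ (_|_) <;> simp [fromCols]

theorem belavkin_mul {p q : ℕ} (K₁ K₂ K : Matrix (Fin p) (Fin p) ℂ) (M₁ M₂ M : Matrix (Fin p) (Fin q) ℂ)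
    (L₁ L₂ L : Matrix (Fin q) (Fin p) ℂ) (N₁ N₂ N : Matrix (Fin q) (Fin q) ℂ)
    (h : coeffMat K M L N = seriesProd (coeffMat K₂ M₂ L₂ N₂) (coeffMat K₁ M₁ L₁ N₁)) :
    belavkin K₂ M₂ L₂ N₂ * belavkin K₁ M₁ L₁ N₁ = belavkin K M L N := by
  simp only [coeffMat, seriesProd, deltaHat, fromBlocks_multiply, fromBlocks_add,
    Matrix.mul_zero, Matrix.zero_mul, Matrix.mul_one, add_zero, zero_add,
    Matrix.mul_sub, Matrix.sub_mul, Matrix.one_mul, fromBlocks_inj] at h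
  obtain ⟨hK, hM, hL, hN⟩ := h
  have hN' : N = N₂ * N₁ := by
    rw [sub_eq_iff_eq_add] at hN
    rw [hN]; abel
  simp only [belavkin, fromBlocks_multiply, Matrix.mul_zero, Matrix.zero_mul,
    Matrix.mul_one, Matrix.one_mul, add_zero, zero_add, zero_mul, mul_zero,
    fromCols_mul_fromBlocks]
  rw [fromCols_add', fromBlocks_inj, fromBlocks_inj, fromCols_inj.eq_iff]
  refine ⟨rfl, ⟨?_, ?_⟩, rfl, hN'.symm, ?_, rfl, rfl⟩
  · rw [hM]; abel
  · rw [hK]; abel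
  · rw [hL]; abel


/-- `G ↦ 𝕍_G` is an injective group homomorphism from `(GL_◁, ◁)` into the invertible
3×3 block matrices: `𝕍_{G₂}·𝕍_{G₁} = 𝕍_{G₂ ◁ G₁}`, it is injective, and
`𝕍_G⁻¹ = 𝕍_{G'}` where `G'` is the `◁`-inverse of `G`. -/
theorem belavkin_hom {p q : ℕ} :
    (∀ (K₁ K₂ K : Matrix (Fin p) (Fin p) ℂ) (M₁ M₂ M : Matrix (Fin p) (Fin q) ℂ)
        (L₁ L₂ L : Matrix (Fin q) (Fin p) ℂ) (N₁ N₂ N : Matrix (Fin q) (Fin q) ℂ),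
        coeffMat K M L N = seriesProd (coeffMat K₂ M₂ L₂ N₂) (coeffMat K₁ M₁ L₁ N₁) →
        belavkin K₂ M₂ L₂ N₂ * belavkin K₁ M₁ L₁ N₁ = belavkin K M L N) ∧
    (∀ (K K' : Matrix (Fin p) (Fin p) ℂ) (M M' : Matrix (Fin p) (Fin q) ℂ)
        (L L' : Matrix (Fin q) (Fin p) ℂ) (N N' : Matrix (Fin q) (Fin q) ℂ),
        belavkin K M L N = belavkin K' M' L' N' →
        K = K' ∧ M = M' ∧ L = L' ∧ N = N') ∧
    (∀ (K : Matrix (Fin p) (Fin p) ℂ) (M : Matrix (Fin p) (Fin q) ℂ)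
        (L : Matrix (Fin q) (Fin p) ℂ) (N : Matrix (Fin q) (Fin q) ℂ),
        IsUnit N →
        -- G' = [[-K + MN⁻¹L, -MN⁻¹],[-N⁻¹L, N⁻¹ - I]] is the ◁-inverse of G
        seriesProd (coeffMat (-K + M * N⁻¹ * L) (-(M * N⁻¹)) (-(N⁻¹ * L)) N⁻¹)
            (coeffMat K M L N) = 0 ∧
        seriesProd (coeffMat K M L N)
            (coeffMat (-K + M * N⁻¹ * L) (-(M * N⁻¹)) (-(N⁻¹ * L)) N⁻¹) = 0 ∧
        (belavkin K M L N)⁻¹ =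
          belavkin (-K + M * N⁻¹ * L) (-(M * N⁻¹)) (-(N⁻¹ * L)) N⁻¹) := by
  refine ⟨belavkin_mul, ?_, ?_⟩
  · intro K K' M M' L L' N N' h
    simp only [belavkin, fromBlocks_inj, fromCols_inj.eq_iff] at h
    tauto
  · intro K M L N hN
    have hd := (Matrix.isUnit_iff_isUnit_det N).mp hN
    have h1 : N⁻¹ * N = 1 := Matrix.nonsing_inv_mul N hd
    have h2 : N * N⁻¹ = 1 := Matrix.mul_nonsing_inv N hd
    have e1 : M * N⁻¹ * N = M := by rw [Matrix.mul_assoc, h1, Matrix.mul_one]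
    have e2 : N * (N⁻¹ * L) = L := by rw [← Matrix.mul_assoc, h2, Matrix.one_mul]
    have hGi : seriesProd (coeffMat (-K + M * N⁻¹ * L) (-(M * N⁻¹)) (-(N⁻¹ * L)) N⁻¹)
        (coeffMat K M L N) = 0 := by
      simp only [seriesProd, coeffMat, deltaHat, fromBlocks_multiply, fromBlocks_add,
        Matrix.mul_zero, Matrix.zero_mul, Matrix.mul_one, add_zero, zero_add,
        Matrix.neg_mul, Matrix.mul_sub, Matrix.sub_mul, Matrix.one_mul]
      rw [← fromBlocks_zero, fromBlocks_inj]
      refine ⟨?_, ?_, ?_, ?_⟩ <;>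
        first
          | (rw [e1]; abel)
          | (rw [h1]; abel)
          | (rw [h2]; abel)
          | (rw [e2]; abel)
          | (rw [← Matrix.mul_assoc]; abel)
          | abel
    have hiG : seriesProd (coeffMat K M L N)
        (coeffMat (-K + M * N⁻¹ * L) (-(M * N⁻¹)) (-(N⁻¹ * L)) N⁻¹) = 0 := by
      simp only [seriesProd, coeffMat, deltaHat, fromBlocks_multiply, fromBlocks_add,
        Matrix.mul_zero, Matrix.zero_mul, Matrix.mul_one, add_zero, zero_add,
        Matrix.mul_neg, Matrix.mul_sub, Matrix.sub_mul, Matrix.one_mul]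
      rw [← fromBlocks_zero, fromBlocks_inj]
      refine ⟨?_, ?_, ?_, ?_⟩ <;>
        first
          | (rw [e1]; abel)
          | (rw [h1]; abel)
          | (rw [h2]; abel)
          | (rw [e2]; abel)
          | (rw [← Matrix.mul_assoc]; abel)
          | abel
    refine ⟨hGi, hiG, ?_⟩
    have hmul := belavkin_mul K (-K + M * N⁻¹ * L) 0 M (-(M * N⁻¹)) 0 L (-(N⁻¹ * L)) 0
      N N⁻¹ 1 ?_
    · have hb1 : belavkin (p := p) (q := q) 0 0 0 1 = 1 := by
        rw [belavkin, fromCols_zero, fromBlocks_one, fromBlocks_one]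
      rw [hb1] at hmul
      exact Matrix.inv_eq_left_inv hmul
    · rw [hGi, coeffMat, sub_self, fromBlocks_zero]
end

section
/- For the Belavkin Lie algebra element ℍ = [[0,μ,κ],[0,ν,λ],[0,0,0]] (3×3 block strictly/upper triangular matrix), the matrix exponential satisfies exp(ℍ) = [[I, M, K],[0, N, L],[0,0,I]] with K = κ + μ·e₂(ν)·λ, M = μ·e₁(ν), L = e₁(ν)·λ, N = exp(ν), where e₁(z) = (eᶻ - 1)/z and e₂(z) = (eᶻ - 1 - z)/z² are the decapitated exponential functions, interpreted for matrix argument ν as e₁(ν) = Σ_{n≥0} νⁿ/(n+1)! and e₂(ν) = Σ_{n≥0} νⁿ/(n+2)!. -/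
open Matrix

/-- The matrix exponential `exp(A) = Σ_{n≥0} Aⁿ/n!`. -/
noncomputable def mexp {m : Type*} [Fintype m] [DecidableEq m]
    (A : Matrix m m ℂ) : Matrix m m ℂ :=
  ∑' n : ℕ, ((n.factorial : ℂ))⁻¹ • A ^ n

/-- The first decapitated exponential `e₁(ν) = (e^ν - 1)/ν = Σ_{n≥0} νⁿ/(n+1)!`. -/
noncomputable def decExp₁ {m : Type*} [Fintype m] [DecidableEq m]
    (ν : Matrix m m ℂ) : Matrix m m ℂ :=
  ∑' n : ℕ, (((n + 1).factorial : ℂ))⁻¹ • ν ^ n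

/-- The second decapitated exponential `e₂(ν) = (e^ν - 1 - ν)/ν² = Σ_{n≥0} νⁿ/(n+2)!`. -/
noncomputable def decExp₂ {m : Type*} [Fintype m] [DecidableEq m]
    (ν : Matrix m m ℂ) : Matrix m m ℂ :=
  ∑' n : ℕ, (((n + 2).factorial : ℂ))⁻¹ • ν ^ n

section Helpers

lemma matrix_hasSum_iff {X m n R : Type*} [AddCommMonoid R] [TopologicalSpace R]
    {f : X → Matrix m n R} {a : Matrix m n R} :
    HasSum f a ↔ ∀ i j, HasSum (fun x => f x i j) (a i j) := by
  exact Pi.hasSum.trans (forall_congr' fun i => Pi.hasSum)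

lemma hasSum_fromBlocks {X l m n o R : Type*} [AddCommMonoid R] [TopologicalSpace R]
    {f₁₁ : X → Matrix n l R} {f₁₂ : X → Matrix n m R} {f₂₁ : X → Matrix o l R}
    {f₂₂ : X → Matrix o m R} {a₁₁ a₁₂ a₂₁ a₂₂}
    (h₁₁ : HasSum f₁₁ a₁₁) (h₁₂ : HasSum f₁₂ a₁₂) (h₂₁ : HasSum f₂₁ a₂₁)
    (h₂₂ : HasSum f₂₂ a₂₂) :
    HasSum (fun x => fromBlocks (f₁₁ x) (f₁₂ x) (f₂₁ x) (f₂₂ x))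
      (fromBlocks a₁₁ a₁₂ a₂₁ a₂₂) := by
  rw [matrix_hasSum_iff] at h₁₁ h₁₂ h₂₁ h₂₂ ⊢
  rintro (i | i) (j | j)
  · simpa using h₁₁ i j
  · simpa using h₁₂ i j
  · simpa using h₂₁ i j
  · simpa using h₂₂ i j

lemma hasSum_fromColumns {X m n₁ n₂ R : Type*} [AddCommMonoid R] [TopologicalSpace R]
    {f₁ : X → Matrix m n₁ R} {f₂ : X → Matrix m n₂ R} {a₁ a₂}
    (h₁ : HasSum f₁ a₁) (h₂ : HasSum f₂ a₂) :
    HasSum (fun x => fromCols (f₁ x) (f₂ x)) (fromCols a₁ a₂) := by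
  rw [matrix_hasSum_iff] at h₁ h₂ ⊢
  rintro i (j | j)
  · simpa using h₁ i j
  · simpa using h₂ i j

def mulLeftHom {m n p R : Type*} [Fintype n] [NonUnitalNonAssocSemiring R]
    (M : Matrix m n R) : Matrix n p R →+ Matrix m p R where
  toFun A := M * A
  map_zero' := Matrix.mul_zero M
  map_add' A B := Matrix.mul_add M A B

def mulRightHom {m n p R : Type*} [Fintype n] [NonUnitalNonAssocSemiring R]
    (M : Matrix n p R) : Matrix m n R →+ Matrix m p R where
  toFun A := A * M
  map_zero' := Matrix.zero_mul M
  map_add' A B := Matrix.add_mul A B M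

lemma HasSum.matrix_mul_left {X m n p R : Type*} [Fintype n] [NonUnitalNonAssocSemiring R]
    [TopologicalSpace R] [ContinuousAdd R] [ContinuousMul R]
    (M : Matrix m n R) {f : X → Matrix n p R} {a} (hf : HasSum f a) :
    HasSum (fun x => M * f x) (M * a) := by
  have : Continuous (mulLeftHom (p := p) M) :=
    Continuous.matrix_mul continuous_const continuous_id
  simpa [mulLeftHom, Function.comp_def] using hf.map (mulLeftHom M) this

lemma HasSum.matrix_mul_right {X m n p R : Type*} [Fintype n] [NonUnitalNonAssocSemiring R]
    [TopologicalSpace R] [ContinuousAdd R] [ContinuousMul R]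
    (M : Matrix n p R) {f : X → Matrix m n R} {a} (hf : HasSum f a) :
    HasSum (fun x => f x * M) (a * M) := by
  have : Continuous (mulRightHom (m := m) M) :=
    Continuous.matrix_mul continuous_id continuous_const
  simpa [mulRightHom, Function.comp_def] using hf.map (mulRightHom M) this

lemma smul_fromColumns {m n₁ n₂ R S : Type*} [SMul S R]
    (c : S) (A : Matrix m n₁ R) (B : Matrix m n₂ R) :
    c • fromCols A B = fromCols (c • A) (c • B) := by
  ext i (j | j) <;> simp [fromCols]

lemma belavkin_pow {p q : ℕ} (κ : Matrix (Fin p) (Fin p) ℂ) (μ : Matrix (Fin p) (Fin q) ℂ)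
    (lam : Matrix (Fin q) (Fin p) ℂ) (ν : Matrix (Fin q) (Fin q) ℂ) (n : ℕ) :
    (fromBlocks (0 : Matrix (Fin p) (Fin p) ℂ) (fromCols μ κ) 0
        ((fromBlocks ν lam 0 0 : Matrix (Fin q ⊕ Fin p) (Fin q ⊕ Fin p) ℂ))) ^ (n + 2) =
      fromBlocks 0 (fromCols (μ * ν ^ (n+1)) (μ * ν ^ n * lam)) 0
        (fromBlocks (ν ^ (n+2)) (ν ^ (n+1) * lam) 0 0) := by
  induction n with
  | zero =>
    rw [pow_two, fromBlocks_multiply]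
    simp [fromCols_mul_fromBlocks, fromBlocks_multiply, pow_two]
  | succ n ih =>
    rw [pow_succ, ih, fromBlocks_multiply]
    simp [fromCols_mul_fromBlocks, fromBlocks_multiply, pow_succ, Matrix.mul_assoc]

end Helpers

/-- For the Belavkin Lie algebra element `ℍ = [[0,μ,κ],[0,ν,λ],[0,0,0]]` the matrix
exponential is `exp(ℍ) = [[I, μe₁(ν), κ + μe₂(ν)λ],[0, e^ν, e₁(ν)λ],[0,0,I]]`. -/
theorem exp_belavkin_lie {p q : ℕ}
    (κ : Matrix (Fin p) (Fin p) ℂ) (μ : Matrix (Fin p) (Fin q) ℂ)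
    (lam : Matrix (Fin q) (Fin p) ℂ) (ν : Matrix (Fin q) (Fin q) ℂ) :
    mexp (fromBlocks (0 : Matrix (Fin p) (Fin p) ℂ) (fromCols μ κ) 0
        (fromBlocks ν lam 0 0)) =
      fromBlocks 1 (fromCols (μ * decExp₁ ν) (κ + μ * decExp₂ ν * lam)) 0
        (fromBlocks (mexp ν) (decExp₁ ν * lam) 0 1) := by
  classical
  set H : Matrix (Fin p ⊕ (Fin q ⊕ Fin p)) (Fin p ⊕ (Fin q ⊕ Fin p)) ℂ :=
    fromBlocks (0 : Matrix (Fin p) (Fin p) ℂ) (fromCols μ κ) 0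
      (fromBlocks ν lam 0 0) with hH
  -- summability of the ν-series
  letI : NormedRing (Matrix (Fin q) (Fin q) ℂ) := Matrix.linftyOpNormedRing
  letI : NormedAlgebra ℂ (Matrix (Fin q) (Fin q) ℂ) := Matrix.linftyOpNormedAlgebra
  have hb : ∀ k : ℕ, Summable fun n : ℕ => (((n + k).factorial : ℂ))⁻¹ • ν ^ n := by
    intro k
    refine Summable.of_norm_bounded (NormedSpace.norm_expSeries_summable' (𝕂 := ℂ) ν) ?_
    intro n
    rw [norm_smul, norm_smul]
    gcongr
    rw [norm_inv, norm_inv, Complex.norm_natCast, Complex.norm_natCast]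
    exact inv_anti₀ (by positivity)
      (by exact_mod_cast Nat.factorial_le (Nat.le_add_right n k))
  have hexp : HasSum (fun n : ℕ => ((n.factorial : ℂ))⁻¹ • ν ^ n) (mexp ν) := by
    rw [mexp]; exact (by simpa using hb 0 : Summable
      fun n : ℕ => ((n.factorial : ℂ))⁻¹ • ν ^ n).hasSum
  have h1 : HasSum (fun n : ℕ => (((n + 1).factorial : ℂ))⁻¹ • ν ^ n) (decExp₁ ν) := by
    rw [decExp₁]; exact (hb 1).hasSum
  have h2 : HasSum (fun n : ℕ => (((n + 2).factorial : ℂ))⁻¹ • ν ^ n) (decExp₂ ν) := by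
    rw [decExp₂]; exact (hb 2).hasSum
  have h1' : HasSum (fun n : ℕ => (((n + 2).factorial : ℂ))⁻¹ • ν ^ (n + 1))
      (decExp₁ ν - 1) := by
    have := (hasSum_nat_add_iff'
      (f := fun n : ℕ => (((n + 1).factorial : ℂ))⁻¹ • ν ^ n) 1).2 h1
    simpa [add_assoc] using this
  have hexp' : HasSum (fun n : ℕ => (((n + 2).factorial : ℂ))⁻¹ • ν ^ (n + 2))
      (mexp ν - 1 - ν) := by
    have := (hasSum_nat_add_iff'
      (f := fun n : ℕ => ((n.factorial : ℂ))⁻¹ • ν ^ n) 2).2 hexp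
    simpa [Finset.sum_range_succ, sub_sub] using this
  -- the combined block sum
  have key : HasSum (fun n : ℕ => (((n + 2).factorial : ℂ))⁻¹ • H ^ (n + 2))
      (fromBlocks 0 (fromCols (μ * (decExp₁ ν - 1)) (μ * decExp₂ ν * lam)) 0
        (fromBlocks (mexp ν - 1 - ν) ((decExp₁ ν - 1) * lam) 0 0)) := by
    have hblocks := hasSum_fromBlocks (hasSum_zero : HasSum (fun _ : ℕ => (0 : Matrix (Fin p) (Fin p) ℂ)) 0)
      (hasSum_fromColumns (h1'.matrix_mul_left μ) ((h2.matrix_mul_left μ).matrix_mul_right lam))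
      (hasSum_zero : HasSum (fun _ : ℕ => (0 : Matrix (Fin q ⊕ Fin p) (Fin p) ℂ)) 0)
      (hasSum_fromBlocks hexp' (h1'.matrix_mul_right lam)
        (hasSum_zero : HasSum (fun _ : ℕ => (0 : Matrix (Fin p) (Fin q) ℂ)) 0)
        (hasSum_zero : HasSum (fun _ : ℕ => (0 : Matrix (Fin p) (Fin p) ℂ)) 0))
    convert hblocks using 1
    funext n
    rw [hH, belavkin_pow, fromBlocks_smul, smul_fromColumns, fromBlocks_smul]
    simp [Matrix.mul_smul, Matrix.smul_mul]
  -- reassemble the full series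
  have hsum2 : ∑ i ∈ Finset.range 2, ((i.factorial : ℂ))⁻¹ • H ^ i = 1 + H := by
    simp [Finset.sum_range_succ]
  have hfinal : HasSum (fun n : ℕ => ((n.factorial : ℂ))⁻¹ • H ^ n)
      (fromBlocks 1 (fromCols (μ * decExp₁ ν) (κ + μ * decExp₂ ν * lam)) 0
        (fromBlocks (mexp ν) (decExp₁ ν * lam) 0 1)) := by
    refine (hasSum_nat_add_iff' 2).1 ?_
    rw [hsum2]
    convert key using 1
    · rfl
    rw [hH]
    ext (i | i | i) (j | j | j) <;>
      simp [fromBlocks, fromCols, Matrix.one_apply, Matrix.mul_sub, Matrix.sub_mul,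
        Matrix.mul_one, Matrix.one_mul, sub_sub]
  rw [mexp]
  exact hfinal.tsum_eq
end

section
/- For a 2×2 block matrix H = [[κ, μ],[λ, ν]], the modified exponential ê(H) := Σ_{n≥1} (1/n!) H(δ̂H)^{n-1}, with δ̂ = [[0,0],[0,I]], equals [[κ + μ e₂(ν) λ, μ e₁(ν)],[e₁(ν) λ, e^ν - I]], where e₁(ν) = Σ_{n≥0} νⁿ/(n+1)! and e₂(ν) = Σ_{n≥0} νⁿ/(n+2)!. -/
open Matrix


lemma hasSum_matrix_iff {ι m n α : Type*} [AddCommMonoid α] [TopologicalSpace α]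
    {f : ι → Matrix m n α} {a : Matrix m n α} :
    HasSum f a ↔ ∀ i j, HasSum (fun k => f k i j) (a i j) := by
  exact Pi.hasSum.trans (forall_congr' fun i => Pi.hasSum)

lemma hasSum_fromBlocks_s16 {ι n' m' p' q' α : Type*} [AddCommMonoid α] [TopologicalSpace α]
    {f₁ : ι → Matrix n' p' α} {f₂ : ι → Matrix n' q' α}
    {f₃ : ι → Matrix m' p' α} {f₄ : ι → Matrix m' q' α}
    {a₁ a₂ a₃ a₄} (h₁ : HasSum f₁ a₁) (h₂ : HasSum f₂ a₂)
    (h₃ : HasSum f₃ a₃) (h₄ : HasSum f₄ a₄) :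
    HasSum (fun k => fromBlocks (f₁ k) (f₂ k) (f₃ k) (f₄ k)) (fromBlocks a₁ a₂ a₃ a₄) := by
  rw [hasSum_matrix_iff] at h₁ h₂ h₃ h₄ ⊢
  rintro (i | i) (j | j)
  · simpa using h₁ i j
  · simpa using h₂ i j
  · simpa using h₃ i j
  · simpa using h₄ i j

lemma HasSum.mat_mul_left {ι m n o : Type*} [Fintype n]
    {f : ι → Matrix n o ℂ} {a} (h : HasSum f a) (M : Matrix m n ℂ) :
    HasSum (fun k => M * f k) (M * a) :=
  h.map (AddMonoidHom.mk' (fun A => M * A) fun _ _ => Matrix.mul_add _ _ _)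
    (continuous_const.matrix_mul continuous_id)

lemma HasSum.mat_mul_right {ι m n o : Type*} [Fintype n]
    {f : ι → Matrix m n ℂ} {a} (h : HasSum f a) (M : Matrix n o ℂ) :
    HasSum (fun k => f k * M) (a * M) :=
  h.map (AddMonoidHom.mk' (fun A => A * M) fun _ _ => Matrix.add_mul _ _ _)
    (continuous_id.matrix_mul continuous_const)

lemma aux_summable {q : ℕ} (ν : Matrix (Fin q) (Fin q) ℂ) (k : ℕ) :
    Summable fun n : ℕ => (((n + k).factorial : ℂ))⁻¹ • ν ^ n := by
  letI : SeminormedRing (Matrix (Fin q) (Fin q) ℂ) := Matrix.linftyOpSemiNormedRing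
  letI : NormedRing (Matrix (Fin q) (Fin q) ℂ) := Matrix.linftyOpNormedRing
  letI : NormedAlgebra ℂ (Matrix (Fin q) (Fin q) ℂ) := Matrix.linftyOpNormedAlgebra
  have hb := NormedSpace.norm_expSeries_summable' (𝕂 := ℂ) ν
  refine Summable.of_norm (hb.of_nonneg_of_le (fun n => norm_nonneg _) fun n => ?_)
  rw [norm_smul, norm_smul]
  apply mul_le_mul_of_nonneg_right _ (norm_nonneg _)
  rw [norm_inv, norm_inv, Complex.norm_natCast, Complex.norm_natCast]
  have h1 : (0:ℝ) < n.factorial := by positivity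
  have h2 : (n.factorial : ℝ) ≤ ((n+k).factorial : ℝ) := by
    exact_mod_cast Nat.factorial_le (Nat.le_add_right n k)
  exact inv_anti₀ h1 h2


/-- The modified exponential `ê(H) = Σ_{n≥1} (1/n!) H(δ̂H)^{n-1}` of the block matrix
`H = [[κ,μ],[λ,ν]]` equals `[[κ + μe₂(ν)λ, μe₁(ν)],[e₁(ν)λ, e^ν - I]]`. -/
theorem modified_exp_blocks {p q : ℕ}
    (κ : Matrix (Fin p) (Fin p) ℂ) (μ : Matrix (Fin p) (Fin q) ℂ)
    (lam : Matrix (Fin q) (Fin p) ℂ) (ν : Matrix (Fin q) (Fin q) ℂ) :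
    (∑' n : ℕ, (((n + 1).factorial : ℂ))⁻¹ •
        (fromBlocks κ μ lam ν * (deltaHat p q * fromBlocks κ μ lam ν) ^ n)) =
      fromBlocks (κ + μ * decExp₂ ν * lam) (μ * decExp₁ ν)
        (decExp₁ ν * lam) (mexp ν - 1) := by
  -- basic series facts
  have hexp : HasSum (fun n : ℕ => ((n.factorial : ℂ))⁻¹ • ν ^ n) (mexp ν) := by
    have := aux_summable ν 0
    simp only [Nat.add_zero] at this
    exact this.hasSum
  have h1 : HasSum (fun n : ℕ => (((n + 1).factorial : ℂ))⁻¹ • ν ^ n) (decExp₁ ν) :=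
    (aux_summable ν 1).hasSum
  have h2 : HasSum (fun n : ℕ => (((n + 2).factorial : ℂ))⁻¹ • ν ^ n) (decExp₂ ν) :=
    (aux_summable ν 2).hasSum
  -- shifted versions
  have h1' : HasSum (fun n : ℕ => (((n + 2).factorial : ℂ))⁻¹ • ν ^ (n + 1))
      (decExp₁ ν - 1) := by
    simpa using (hasSum_nat_add_iff' 1).mpr h1
  have hexp' : HasSum (fun n : ℕ => (((n + 2).factorial : ℂ))⁻¹ • ν ^ (n + 2))
      (mexp ν - 1 - ν) := by
    have := (hasSum_nat_add_iff' 2).mpr hexp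
    simp only [Finset.sum_range_succ, Finset.sum_range_zero] at this
    simpa [sub_sub] using this
  -- structure of the powers
  have hX : deltaHat p q * fromBlocks κ μ lam ν = fromBlocks 0 0 lam ν := by
    simp [deltaHat, fromBlocks_multiply]
  have hXpow : ∀ n : ℕ, (fromBlocks 0 0 lam ν : Matrix (Fin p ⊕ Fin q) (Fin p ⊕ Fin q) ℂ)
      ^ (n + 1) = fromBlocks 0 0 (ν ^ n * lam) (ν ^ (n + 1)) := by
    intro n
    induction n with
    | zero => simp
    | succ n ih =>
      rw [pow_succ, ih, fromBlocks_multiply]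
      simp [pow_succ, mul_assoc]
  set f : ℕ → Matrix (Fin p ⊕ Fin q) (Fin p ⊕ Fin q) ℂ := fun n =>
    (((n + 1).factorial : ℂ))⁻¹ •
      (fromBlocks κ μ lam ν * (deltaHat p q * fromBlocks κ μ lam ν) ^ n) with hf
  have key : HasSum f (fromBlocks (κ + μ * decExp₂ ν * lam) (μ * decExp₁ ν)
      (decExp₁ ν * lam) (mexp ν - 1)) := by
    rw [← (hasSum_nat_add_iff' 1)]
    have hfn : ∀ n : ℕ, f (n + 1) = fromBlocks
        ((((n + 2).factorial : ℂ))⁻¹ • (μ * ν ^ n * lam))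
        ((((n + 2).factorial : ℂ))⁻¹ • (μ * ν ^ (n + 1)))
        ((((n + 2).factorial : ℂ))⁻¹ • (ν ^ (n + 1) * lam))
        ((((n + 2).factorial : ℂ))⁻¹ • ν ^ (n + 2)) := by
      intro n
      rw [hf]
      simp only [hX, hXpow n, fromBlocks_multiply]
      simp [Matrix.fromBlocks_smul, ← Matrix.mul_assoc, ← pow_succ', show n+1+1 = n+2 from rfl]
    have hf0 : f 0 = fromBlocks κ μ lam ν := by simp [hf]
    simp only [hfn, Finset.sum_range_one, hf0]
    have hsub : fromBlocks (κ + μ * decExp₂ ν * lam) (μ * decExp₁ ν) (decExp₁ ν * lam)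
        (mexp ν - 1) - fromBlocks κ μ lam ν =
        fromBlocks (μ * decExp₂ ν * lam) (μ * decExp₁ ν - μ) (decExp₁ ν * lam - lam)
          (mexp ν - 1 - ν) := by
      rw [sub_eq_iff_eq_add, fromBlocks_add]
      simp [sub_add_cancel, add_comm]
    rw [hsub]
    refine hasSum_fromBlocks_s16 ?_ ?_ ?_ ?_
    · have := (h2.mat_mul_left μ).mat_mul_right lam
      simpa [mul_smul_comm, smul_mul_assoc] using this
    · have := h1'.mat_mul_left μ
      simpa [mul_smul_comm, Matrix.mul_sub, Matrix.mul_one] using this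
    · have := h1'.mat_mul_right lam
      simpa [smul_mul_assoc, Matrix.sub_mul, Matrix.one_mul] using this
    · exact hexp'
  exact key.tsum_eq
end
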